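/- For integers i ≥ 3 and complex numbers α, β and real X > 0, the contour integral (1/2πi) ∮ X^s (β+s)²/(α+s) · s^{-(i-1)} ds, taken over a circle of radius 1 centered at the origin (assuming |α| < 1 so both poles lie inside), equals d²/dx² [ ((x + log X)^{i-1}/(i-2)!) ∫₀¹ (1-u)^{i-2} e^{x(β - αu)} X^{-αu} du ] evaluated at x = 0. -/

import Mathlib

open Complex intervalIntegral MeasureTheory Metric Set
open scoped Real Nat

noncomputable section

namespace Stmt7Aux

/-- The entire function `∑ (-α)^n y^(n+k)/(n+k)!`. -/
def E (α : ℂ) (k : ℕ) (y : ℂ) : ℂ := ∑' n : ℕ, (-α) ^ n * y ^ (n + k) / ((n + k)! : ℂ)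


lemma norm_term_le (α : ℂ) (k : ℕ) {y : ℂ} {R : ℝ} (hy : ‖y‖ ≤ R) (n : ℕ) :
    ‖(-α) ^ n * y ^ (n + k) / ((n + k)! : ℂ)‖ ≤ R ^ k * ((‖α‖ * R) ^ n / n !) := by
  have hR : 0 ≤ R := (norm_nonneg y).trans hy
  have h1 : ‖(-α) ^ n * y ^ (n + k) / ((n + k)! : ℂ)‖
      = ‖α‖ ^ n * ‖y‖ ^ (n + k) / ((n + k)! : ℝ) := by
    simp [norm_div, norm_mul, norm_pow]
  rw [h1]
  have h2 : ‖α‖ ^ n * ‖y‖ ^ (n + k) / ((n + k)! : ℝ) ≤ ‖α‖ ^ n * R ^ (n + k) / (n ! : ℝ) := by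
    apply div_le_div₀ (by positivity) ?_ (by positivity) ?_
    · exact mul_le_mul_of_nonneg_left (pow_le_pow_left₀ (norm_nonneg y) hy _)
        (by positivity)
    · exact_mod_cast Nat.factorial_le (n.le_add_right k)
  refine h2.trans_eq ?_
  rw [pow_add, mul_pow]
  ring


lemma summable_E (α : ℂ) (k : ℕ) (y : ℂ) :
    Summable (fun n : ℕ => (-α) ^ n * y ^ (n + k) / ((n + k)! : ℂ)) := by
  refine Summable.of_norm_bounded
    ((Real.summable_pow_div_factorial (‖α‖ * ‖y‖)).mul_left (‖y‖ ^ k)) ?_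
  exact fun n => norm_term_le α k le_rfl n


lemma hasDerivAt_E (α : ℂ) (k : ℕ) (y : ℂ) : HasDerivAt (E α (k + 1)) (E α k y) y := by
  have key := hasDerivAt_tsum_of_isPreconnected
    (u := fun n => (‖y‖ + 1) ^ k * ((‖α‖ * (‖y‖ + 1)) ^ n / n !))
    (t := ball (0 : ℂ) (‖y‖ + 1))
    (g := fun n z => (-α) ^ n * z ^ (n + (k + 1)) / ((n + (k + 1))! : ℂ))
    (g' := fun n z => (-α) ^ n * z ^ (n + k) / ((n + k)! : ℂ))
    (y₀ := 0) (y := y)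
    (((Real.summable_pow_div_factorial (‖α‖ * (‖y‖ + 1))).mul_left ((‖y‖ + 1) ^ k)))
    isOpen_ball (convex_ball 0 _).isPreconnected ?_ ?_ ?_ ?_ ?_
  · exact key
  · intro n z _
    have h1 : HasDerivAt (fun z : ℂ => z ^ (n + k + 1)) (((n + k + 1) : ℂ) * z ^ (n + k)) z := by
      simpa using hasDerivAt_pow (n + k + 1) z
    have h2 := (h1.const_mul ((-α) ^ n)).div_const (((n + k + 1)! : ℂ))
    refine h2.congr_deriv ?_
    symm
    have hne : ((n + k + 1 : ℕ) : ℂ) ≠ 0 := Nat.cast_ne_zero.mpr (Nat.succ_ne_zero _)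
    have hfac : ((n + k)! : ℂ) ≠ 0 := Nat.cast_ne_zero.mpr (Nat.factorial_ne_zero _)
    rw [Nat.factorial_succ]
    push_cast
    conv_rhs => rw [mul_div_assoc]
    rw [mul_div_mul_left _ _ (by exact_mod_cast hne : ((n : ℂ) + k + 1) ≠ 0), mul_div_assoc]
  · intro n z hz
    exact norm_term_le α k (le_of_lt (mem_ball_zero_iff.mp hz)) n
  · exact mem_ball_zero_iff.mpr (by simp; positivity)
  · refine summable_of_ne_finset_zero (s := ∅) fun n _ => ?_
    simp [zero_pow (Nat.succ_ne_zero (n + k))]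
  · exact mem_ball_zero_iff.mpr (lt_add_one _)

lemma tsum_intervalIntegral {a b : ℝ} (hab : a ≤ b) (F : ℕ → ℝ → ℂ) (u : ℕ → ℝ)
    (hu : Summable u) (hF : ∀ n, ContinuousOn (F n) (Icc a b))
    (hbd : ∀ n, ∀ t ∈ Icc a b, ‖F n t‖ ≤ u n) :
    ∫ t in a..b, ∑' n, F n t = ∑' n, ∫ t in a..b, F n t := by
  have h1 : ∀ n, IntegrableOn (F n) (Ioc a b) volume :=
    fun n => ((hF n).integrableOn_Icc).mono_set Ioc_subset_Icc_self
  have h2 : Summable fun n => ∫ t in Ioc a b, ‖F n t‖ := by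
    refine Summable.of_nonneg_of_le (fun n => integral_nonneg fun t => norm_nonneg _)
      (fun n => ?_) (hu.mul_left (b - a))
    calc ∫ t in Ioc a b, ‖F n t‖ ≤ ∫ _t in Ioc a b, u n := by
          refine setIntegral_mono_on (h1 n).norm (integrableOn_const ?_)
            measurableSet_Ioc fun t ht => hbd n t (Ioc_subset_Icc_self ht)
          exact measure_Ioc_lt_top.ne
      _ = (b - a) * u n := by
          rw [setIntegral_const, Real.volume_real_Ioc_of_le hab, smul_eq_mul]
  simp only [intervalIntegral.integral_of_le hab]
  exact (integral_tsum_of_summable_integral_norm h1 h2).symm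

lemma tsum_circleIntegral (F : ℕ → ℂ → ℂ) (u : ℕ → ℝ) (hu : Summable u)
    (hF : ∀ n, ContinuousOn (F n) (sphere (0 : ℂ) 1))
    (hbd : ∀ n, ∀ z ∈ sphere (0 : ℂ) 1, ‖F n z‖ ≤ u n) :
    (∮ z in C(0, 1), ∑' n, F n z) = ∑' n, ∮ z in C(0, 1), F n z := by
  simp only [circleIntegral, deriv_circleMap, smul_eq_mul]
  rw [show (fun θ : ℝ => circleMap 0 1 θ * I * ∑' n, F n (circleMap 0 1 θ))
      = fun θ : ℝ => ∑' n, circleMap 0 1 θ * I * F n (circleMap 0 1 θ) from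
    funext fun θ => (tsum_mul_left).symm]
  exact tsum_intervalIntegral Real.two_pi_pos.le _ u hu
    (fun n => (((continuous_circleMap 0 1).mul continuous_const).continuousOn).mul
      ((hF n).comp (continuous_circleMap 0 1).continuousOn
        fun θ _ => circleMap_mem_sphere (0 : ℂ) zero_le_one θ))
    (fun n θ _ => by
      have : ‖circleMap 0 1 θ * I * F n (circleMap 0 1 θ)‖ = ‖F n (circleMap 0 1 θ)‖ := by
        simp [norm_mul]
      rw [this]
      exact hbd n _ (circleMap_mem_sphere (0 : ℂ) zero_le_one θ))


lemma sphere_ne_zero {z : ℂ} (hz : z ∈ sphere (0 : ℂ) 1) : z ≠ 0 := by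
  intro h
  rw [mem_sphere_zero_iff_norm, h] at hz
  simp at hz

lemma sphere_add_ne_zero {α z : ℂ} (hα : ‖α‖ < 1) (hz : z ∈ sphere (0 : ℂ) 1) :
    z + α ≠ 0 := by
  intro h
  rw [mem_sphere_zero_iff_norm] at hz
  have : z = -α := by linear_combination h
  rw [this, norm_neg] at hz
  exact absurd hz (by linarith)

lemma cauchy_pow (α : ℂ) (hα : ‖α‖ < 1) (j : ℕ) :
    (∮ z in C(0, 1), z ^ j / (z + α)) = (2 * ↑π * I) * (-α) ^ j := by
  have hd : DiffContOnCl ℂ (fun z : ℂ => z ^ j) (ball 0 1) :=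
    (differentiable_pow j).diffContOnCl
  have hw : -α ∈ ball (0 : ℂ) 1 := by
    rw [mem_ball_zero_iff, norm_neg]; exact hα
  have h := hd.circleIntegral_sub_inv_smul hw
  rw [show (fun z : ℂ => z ^ j / (z + α)) = fun z : ℂ => (z - -α)⁻¹ • z ^ j from
    funext fun z => by rw [smul_eq_mul, sub_neg_eq_add, div_eq_mul_inv, mul_comm]]
  rw [h, smul_eq_mul]

lemma circleIntegrable_of_sphere {f : ℂ → ℂ} (hf : ContinuousOn f (sphere (0 : ℂ) 1)) :
    CircleIntegrable f 0 1 := hf.circleIntegrable zero_le_one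

lemma cont_inv_add (α : ℂ) (hα : ‖α‖ < 1) :
    ContinuousOn (fun z : ℂ => (z + α)⁻¹) (sphere (0 : ℂ) 1) :=
  (continuousOn_id.add continuousOn_const).inv₀ fun z hz => sphere_add_ne_zero hα hz

lemma cont_zpow_sphere (n : ℤ) : ContinuousOn (fun z : ℂ => z ^ n) (sphere (0 : ℂ) 1) :=
  fun z hz => ((continuousAt_zpow₀ z n (Or.inl (sphere_ne_zero hz))).continuousWithinAt)

lemma cauchy_zpow_neg (α : ℂ) (hα : ‖α‖ < 1) (l : ℕ) :
    (∮ z in C(0, 1), z ^ (-(l : ℤ) - 1) / (z + α)) = 0 := by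
  rcases eq_or_ne α 0 with rfl | hα0
  · rw [circleIntegral.integral_congr zero_le_one
      (g := fun z : ℂ => (z - 0) ^ (-(l : ℤ) - 2)) ?_]
    · exact circleIntegral.integral_sub_zpow_of_ne (by omega) 0 0 1
    · intro z hz
      have hz0 := sphere_ne_zero hz
      simp only [add_zero, sub_zero]
      rw [div_eq_mul_inv, ← zpow_neg_one z, ← zpow_add₀ hz0]
      ring_nf
  · induction l with
    | zero =>
      have key : EqOn (fun z : ℂ => z ^ (-((0 : ℕ) : ℤ) - 1) / (z + α))
          (fun z : ℂ => α⁻¹ * (z⁻¹ - (z + α)⁻¹)) (sphere (0 : ℂ) 1) := by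
        intro z hz
        have hz0 := sphere_ne_zero hz
        have hza := sphere_add_ne_zero hα hz
        simp only
        rw [show (-((0 : ℕ) : ℤ) - 1) = -1 by norm_num, zpow_neg_one]
        field_simp
        ring
      have hint1 : CircleIntegrable (fun z : ℂ => z⁻¹) 0 1 :=
        circleIntegrable_of_sphere ((cont_zpow_sphere (-1)).congr
          (fun z _ => by simp [zpow_neg_one]))
      have hint2 : CircleIntegrable (fun z : ℂ => (z + α)⁻¹) 0 1 :=
        circleIntegrable_of_sphere (cont_inv_add α hα)
      rw [circleIntegral.integral_congr zero_le_one key,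
        circleIntegral.integral_const_mul,
        circleIntegral.integral_sub hint1 hint2]
      have h1 : (∮ z in C(0, 1), z⁻¹) = 2 * ↑π * I := by
        have := circleIntegral.integral_sub_center_inv (0 : ℂ) (one_ne_zero)
        simpa using this
      have h2 : (∮ z in C(0, 1), (z + α)⁻¹) = 2 * ↑π * I := by
        have := cauchy_pow α hα 0
        simpa [one_div] using this
      rw [h1, h2, sub_self, mul_zero]
    | succ l ih =>
      have key : EqOn (fun z : ℂ => z ^ (-((l + 1 : ℕ) : ℤ) - 1) / (z + α))
          (fun z : ℂ => α⁻¹ * ((z - 0) ^ (-(l : ℤ) - 2) - z ^ (-(l : ℤ) - 1) / (z + α)))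
          (sphere (0 : ℂ) 1) := by
        intro z hz
        have hz0 := sphere_ne_zero hz
        have hza := sphere_add_ne_zero hα hz
        simp only [sub_zero]
        have e1 : z ^ (-((l + 1 : ℕ) : ℤ) - 1) = (z ^ (l + 2 : ℕ))⁻¹ := by
          rw [show (-((l + 1 : ℕ) : ℤ) - 1) = -((l + 2 : ℕ) : ℤ) by push_cast; ring,
            zpow_neg, zpow_natCast]
        have e2 : z ^ (-(l : ℤ) - 2) = (z ^ (l + 2 : ℕ))⁻¹ := by
          rw [show (-(l : ℤ) - 2) = -((l + 2 : ℕ) : ℤ) by push_cast; ring,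
            zpow_neg, zpow_natCast]
        have e3 : z ^ (-(l : ℤ) - 1) = (z ^ (l + 1 : ℕ))⁻¹ := by
          rw [show (-(l : ℤ) - 1) = -((l + 1 : ℕ) : ℤ) by push_cast; ring,
            zpow_neg, zpow_natCast]
        rw [e1, e2, e3]
        have hzp : z ^ (l + 2 : ℕ) ≠ 0 := pow_ne_zero _ hz0
        have hzp1 : z ^ (l + 1 : ℕ) ≠ 0 := pow_ne_zero _ hz0
        field_simp
        ring
      rw [circleIntegral.integral_congr zero_le_one key,
        circleIntegral.integral_const_mul,
        circleIntegral.integral_sub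
          (circleIntegrable_of_sphere ((cont_zpow_sphere (-(l : ℤ) - 2)).congr
            (fun z hz => by simp [sub_zero])))
          (circleIntegrable_of_sphere (((cont_zpow_sphere (-(l : ℤ) - 1)).mul
            (cont_inv_add α hα)).congr (fun z hz => by rw [div_eq_mul_inv]; rfl))),
        circleIntegral.integral_sub_zpow_of_ne (by omega) 0 0 1, ih, sub_self, mul_zero]


lemma exp_tsum (w : ℂ) : Complex.exp w = ∑' n : ℕ, w ^ n / (n ! : ℂ) := by
  rw [Complex.exp_eq_exp_ℂ, NormedSpace.exp_eq_tsum_div]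

lemma circle_exp_zpow (α : ℂ) (hα : ‖α‖ < 1) (L : ℝ) (k : ℕ) :
    (∮ z in C(0, 1), Complex.exp (L * z) * z ^ (-(k : ℤ)) / (z + α))
      = (2 * ↑π * I) * E α k (L : ℂ) := by
  have hα1 : (0:ℝ) < 1 - ‖α‖ := by linarith
  set c : ℝ := (1 - ‖α‖)⁻¹ with hc
  have hc0 : 0 ≤ c := le_of_lt (inv_pos.mpr hα1)
  set F : ℕ → ℂ → ℂ := fun p z => ((L : ℂ) ^ p / (p ! : ℂ)) * (z ^ ((p : ℤ) - k) / (z + α))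
    with hF
  -- Pointwise expansion on the sphere
  have key : EqOn (fun z : ℂ => Complex.exp (L * z) * z ^ (-(k : ℤ)) / (z + α))
      (fun z : ℂ => ∑' p, F p z) (sphere (0 : ℂ) 1) := by
    intro z hz
    have hz0 := sphere_ne_zero hz
    simp only [hF]
    rw [exp_tsum ((L : ℂ) * z), mul_div_assoc, ← tsum_mul_right]
    refine tsum_congr fun p => ?_
    have hzz : z ^ ((p : ℤ) - (k : ℤ)) = z ^ p * (z ^ ((k : ℤ)))⁻¹ := by
      rw [zpow_sub₀ hz0, zpow_natCast, div_eq_mul_inv]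
    rw [mul_pow, hzz, ← zpow_neg]
    ring
  rw [circleIntegral.integral_congr zero_le_one key]
  -- bound on sphere
  have hnormz : ∀ z ∈ sphere (0 : ℂ) 1, ∀ m : ℤ, ‖z ^ m‖ = 1 := by
    intro z hz m
    rw [norm_zpow, mem_sphere_zero_iff_norm.mp hz, one_zpow]
  have hlow : ∀ z ∈ sphere (0 : ℂ) 1, 1 - ‖α‖ ≤ ‖z + α‖ := by
    intro z hz
    have h1 : ‖z‖ - ‖α‖ ≤ ‖z + α‖ := by
      have := norm_sub_norm_le z (-α)
      simpa [sub_neg_eq_add] using this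
    rwa [mem_sphere_zero_iff_norm.mp hz] at h1
  have hbd : ∀ p, ∀ z ∈ sphere (0 : ℂ) 1, ‖F p z‖ ≤ c * (|L| ^ p / (p ! : ℝ)) := by
    intro p z hz
    have hza := sphere_add_ne_zero hα hz
    have h1 : ‖F p z‖ = ‖z + α‖⁻¹ * (|L| ^ p / (p ! : ℝ)) := by
      simp only [hF, norm_mul, norm_div, norm_pow, Complex.norm_real,
        Real.norm_eq_abs, hnormz z hz, Complex.norm_natCast, one_div]
      ring
    rw [h1]
    have h2 : ‖z + α‖⁻¹ ≤ c := by
      rw [hc]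
      exact inv_anti₀ hα1 (hlow z hz)
    have h3 : (0:ℝ) ≤ |L| ^ p / (p ! : ℝ) := by positivity
    exact mul_le_mul_of_nonneg_right h2 h3
  rw [tsum_circleIntegral F (fun p => c * (|L| ^ p / (p ! : ℝ)))
    ((Real.summable_pow_div_factorial |L|).mul_left c)
    (fun p => (continuousOn_const.mul (((cont_zpow_sphere ((p : ℤ) - k)).mul
      (cont_inv_add α hα)).congr (fun z hz => by rw [div_eq_mul_inv]; rfl))))
    hbd]
  -- compute each integral
  have hval : ∀ p : ℕ, (∮ z in C(0, 1), F p z)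
      = ((L : ℂ) ^ p / (p ! : ℂ)) * (if k ≤ p then (2 * ↑π * I) * (-α) ^ (p - k) else 0) := by
    intro p
    rw [hF]
    simp only
    rw [circleIntegral.integral_const_mul]
    congr 1
    by_cases hpk : k ≤ p
    · rw [if_pos hpk]
      refine Eq.trans ?_ (cauchy_pow α hα (p - k))
      apply circleIntegral.integral_congr zero_le_one
      intro z hz
      simp only
      rw [show ((p : ℤ) - (k : ℤ)) = ((p - k : ℕ) : ℤ) from by omega, zpow_natCast]
    · rw [if_neg hpk]
      refine Eq.trans ?_ (cauchy_zpow_neg α hα (k - p - 1))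
      apply circleIntegral.integral_congr zero_le_one
      intro z hz
      simp only
      rw [show ((p : ℤ) - (k : ℤ)) = (-((k - p - 1 : ℕ) : ℤ) - 1) from by omega]
  rw [tsum_congr hval]
  -- summability of the explicit values
  have hsum : Summable (fun p : ℕ => ((L : ℂ) ^ p / (p ! : ℂ)) *
      (if k ≤ p then (2 * ↑π * I) * (-α) ^ (p - k) else 0)) := by
    refine Summable.of_norm_bounded
      ((Real.summable_pow_div_factorial |L|).mul_left (2 * π)) (fun p => ?_)
    rw [norm_mul]
    have h1 : ‖(L : ℂ) ^ p / (p ! : ℂ)‖ = |L| ^ p / (p ! : ℝ) := by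
      simp [norm_div, norm_pow]
    rw [h1]
    have h2 : ‖(if k ≤ p then (2 * ↑π * I) * (-α) ^ (p - k) else 0 : ℂ)‖ ≤ 2 * π := by
      split_ifs
      · rw [norm_mul]
        have hnorm2pi : ‖(2 * ↑π * I : ℂ)‖ = 2 * π := by
          simp [norm_mul, Complex.norm_real, Real.norm_eq_abs,
            _root_.abs_of_nonneg Real.pi_pos.le]
        rw [hnorm2pi, norm_pow, norm_neg]
        calc (2 * π) * ‖α‖ ^ (p - k) ≤ (2 * π) * 1 := by
              apply mul_le_mul_of_nonneg_left _ (by positivity)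
              exact pow_le_one₀ (norm_nonneg α) hα.le
          _ = 2 * π := mul_one _
      · simp only [norm_zero]
        positivity
    calc |L| ^ p / (p ! : ℝ) * ‖(if k ≤ p then (2 * ↑π * I) * (-α) ^ (p - k) else 0 : ℂ)‖
        ≤ |L| ^ p / (p ! : ℝ) * (2 * π) := by
          apply mul_le_mul_of_nonneg_left h2 (by positivity)
      _ = 2 * π * (|L| ^ p / (p ! : ℝ)) := by ring
  -- drop the first k zero terms
  rw [← Summable.sum_add_tsum_nat_add k hsum]
  have hzero : ∀ p ∈ Finset.range k, ((L : ℂ) ^ p / (p ! : ℂ)) *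
      (if k ≤ p then (2 * ↑π * I) * (-α) ^ (p - k) else 0) = 0 := by
    intro p hp
    rw [if_neg (by simpa using Finset.mem_range.mp hp |>.not_ge), mul_zero]
  rw [Finset.sum_congr rfl hzero, Finset.sum_const_zero, zero_add]
  rw [E, ← tsum_mul_left]
  refine tsum_congr fun n => ?_
  rw [if_pos (Nat.le_add_left k n)]
  have : n + k - k = n := by omega
  rw [this]
  ring

lemma beta_nat (M : ℕ) : ∀ n : ℕ,
    (∫ x in (0:ℝ)..1, (1 - x) ^ M * x ^ n) = (M ! * n ! : ℝ) / ((M + n + 1)! : ℝ) := by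
  induction M with
  | zero =>
    intro n
    simp only [pow_zero, one_mul, integral_pow, one_pow, Nat.factorial_zero]
    rw [Nat.factorial_succ]
    have h1 : ((n+1) : ℝ) ≠ 0 := by positivity
    have h2 : (n ! : ℝ) ≠ 0 := by
      exact_mod_cast Nat.factorial_ne_zero n
    push_cast
    field_simp
    simp
  | succ M IH =>
    intro n
    have hu : ∀ x ∈ uIcc (0:ℝ) 1, HasDerivAt (fun x : ℝ => (1 - x) ^ (M + 1))
        (-((M + 1 : ℝ) * (1 - x) ^ M)) x := by
      intro x _
      have h1 : HasDerivAt (fun x : ℝ => 1 - x) (-1) x := by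
        simpa [Pi.sub_def] using (hasDerivAt_const x (1:ℝ)).sub (hasDerivAt_id' x)
      have := (hasDerivAt_pow (M + 1) (1 - x)).comp x h1
      refine this.congr_deriv ?_
      symm
      push_cast
      ring
    have hv : ∀ x ∈ uIcc (0:ℝ) 1, HasDerivAt (fun x : ℝ => x ^ (n + 1) / (n + 1 : ℝ))
        (x ^ n) x := by
      intro x _
      have := (hasDerivAt_pow (n + 1) x).div_const ((n : ℝ) + 1)
      refine this.congr_deriv ?_
      symm
      have h1 : ((n : ℝ) + 1) ≠ 0 := by positivity
      push_cast
      field_simp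
    have hIBP := intervalIntegral.integral_mul_deriv_eq_deriv_mul hu hv
      (by apply Continuous.intervalIntegrable; continuity)
      (by apply Continuous.intervalIntegrable; continuity)
    rw [hIBP]
    simp only [sub_self, zero_pow (Nat.succ_ne_zero M), zero_mul, one_pow, sub_zero,
      zero_pow (Nat.succ_ne_zero n), zero_div, mul_zero, zero_sub, zero_mul, sub_zero]
    have heq : (∫ x in (0:ℝ)..1, -((M + 1 : ℝ) * (1 - x) ^ M) * (x ^ (n + 1) / (n + 1 : ℝ)))
        = (-((M + 1 : ℝ) / (n + 1 : ℝ))) * ∫ x in (0:ℝ)..1, (1 - x) ^ M * x ^ (n + 1) := by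
      rw [← intervalIntegral.integral_const_mul]
      congr 1
      funext x
      ring
    rw [heq, IH (n + 1)]
    have h1 : ((n : ℝ) + 1) ≠ 0 := by positivity
    have h2 : ((M + n + 2)! : ℝ) ≠ 0 := by exact_mod_cast Nat.factorial_ne_zero _
    rw [show (M + 1 + n + 1) = (M + (n + 1) + 1) from by omega]
    rw [show ((M + 1)! : ℝ) = (M + 1) * (M ! : ℝ) from by
      rw [Nat.factorial_succ]; push_cast; ring]
    rw [show ((n + 1)! : ℝ) = (n + 1) * (n ! : ℝ) from by
      rw [Nat.factorial_succ]; push_cast; ring]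
    field_simp

lemma beta_nat_complex (M n : ℕ) :
    (∫ x in (0:ℝ)..1, ((1 - x : ℝ) : ℂ) ^ M * (x : ℂ) ^ n)
      = (((M ! * n ! : ℝ) / ((M + n + 1)! : ℝ) : ℝ) : ℂ) := by
  rw [show (fun x : ℝ => ((1 - x : ℝ) : ℂ) ^ M * (x : ℂ) ^ n)
      = fun x : ℝ => (((1 - x) ^ M * x ^ n : ℝ) : ℂ) from by
    funext x; push_cast; ring]
  rw [intervalIntegral.integral_ofReal, beta_nat M n]


lemma rhs_fun_eq (α β : ℂ) (X : ℝ) (hX : 0 < X) (M : ℕ) (x : ℝ) :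
    (((x : ℂ) + (Real.log X : ℂ)) ^ (M + 1) / ((M ! : ℕ) : ℂ)) *
        (∫ u in (0:ℝ)..1, ((1 - u : ℝ) : ℂ) ^ M *
          Complex.exp ((x : ℂ) * (β - α * (u : ℂ))) * (X : ℂ) ^ (-α * (u : ℂ)))
      = Complex.exp ((x : ℂ) * β) * E α (M + 1) ((x : ℂ) + (Real.log X : ℂ)) := by
  have hXc : (X : ℂ) ≠ 0 := by
    simpa using ne_of_gt hX
  have hlog : Complex.log (X : ℂ) = ((Real.log X : ℝ) : ℂ) := (Complex.ofReal_log hX.le).symm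
  set L : ℂ := ((Real.log X : ℝ) : ℂ) with hL
  set y : ℂ := (x : ℂ) + L with hy
  set w : ℂ := α * y with hw
  set G : ℕ → ℝ → ℂ := fun n u =>
    (Complex.exp ((x : ℂ) * β) * ((-w) ^ n / (n ! : ℂ))) *
      (((1 - u : ℝ) : ℂ) ^ M * (u : ℂ) ^ n) with hG
  have inner_eq : (∫ u in (0:ℝ)..1, ((1 - u : ℝ) : ℂ) ^ M *
      Complex.exp ((x : ℂ) * (β - α * (u : ℂ))) * (X : ℂ) ^ (-α * (u : ℂ)))
      = ∑' n, (Complex.exp ((x : ℂ) * β) * ((-w) ^ n / (n ! : ℂ))) *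
          (((M ! * n ! : ℝ) / ((M + n + 1)! : ℝ) : ℝ) : ℂ) := by
    have hptwise : ∀ u : ℝ, ((1 - u : ℝ) : ℂ) ^ M *
        Complex.exp ((x : ℂ) * (β - α * (u : ℂ))) * (X : ℂ) ^ (-α * (u : ℂ))
        = ∑' n, G n u := by
      intro u
      have hcpow : (X : ℂ) ^ (-α * (u : ℂ)) = Complex.exp (L * (-α * (u : ℂ))) := by
        rw [Complex.cpow_def_of_ne_zero hXc, hlog]
      rw [hcpow]
      have hsplit : Complex.exp ((x : ℂ) * (β - α * (u : ℂ))) * Complex.exp (L * (-α * (u : ℂ)))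
          = Complex.exp ((x : ℂ) * β) * Complex.exp (-w * (u : ℂ)) := by
        rw [← Complex.exp_add, ← Complex.exp_add]
        congr 1
        rw [hw, hy]
        ring
      rw [mul_assoc, hsplit, exp_tsum (-w * (u : ℂ))]
      rw [← mul_assoc, mul_comm (((1 - u : ℝ) : ℂ) ^ M) (Complex.exp ((x : ℂ) * β)),
        mul_assoc, ← tsum_mul_left, ← tsum_mul_left]
      refine tsum_congr fun n => ?_
      rw [hG]
      simp only
      rw [mul_pow]
      ring
    rw [intervalIntegral.integral_congr (g := fun u => ∑' n, G n u)
      (fun u _ => hptwise u)]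
    rw [tsum_intervalIntegral zero_le_one G
      (fun n => ‖Complex.exp ((x : ℂ) * β)‖ * (‖w‖ ^ n / (n ! : ℝ)))
      (((Real.summable_pow_div_factorial ‖w‖).mul_left _)) ?_ ?_]
    · refine tsum_congr fun n => ?_
      rw [hG]
      simp only
      rw [intervalIntegral.integral_const_mul, beta_nat_complex M n]
    · intro n
      apply Continuous.continuousOn
      continuity
    · intro n u hu
      rw [hG]
      simp only [norm_mul, norm_div, norm_pow, norm_neg, Complex.norm_real,
        Real.norm_eq_abs, Complex.norm_natCast]
      have h1 : |1 - u| ≤ 1 := by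
        rw [abs_le]
        constructor <;> [linarith [hu.2]; linarith [hu.1]]
      have h2 : |u| ≤ 1 := by
        rw [abs_le]
        constructor <;> [linarith [hu.1]; linarith [hu.2]]
      have h3 : |1 - u| ^ M * |u| ^ n ≤ 1 := by
        calc |1 - u| ^ M * |u| ^ n ≤ 1 * 1 := by
              apply mul_le_mul (pow_le_one₀ (abs_nonneg _) h1)
                (pow_le_one₀ (abs_nonneg _) h2) (by positivity) zero_le_one
          _ = 1 := one_mul 1
      calc ‖Complex.exp ((x:ℂ) * β)‖ * (‖α * y‖ ^ n / (n ! : ℝ)) * (|1 - u| ^ M * |u| ^ n)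
          ≤ ‖Complex.exp ((x:ℂ) * β)‖ * (‖α * y‖ ^ n / (n ! : ℝ)) * 1 := by
            apply mul_le_mul_of_nonneg_left h3 (by positivity)
        _ = ‖Complex.exp ((x:ℂ) * β)‖ * (‖α * y‖ ^ n / (n ! : ℝ)) := mul_one _
  rw [inner_eq, ← tsum_mul_left, E, ← tsum_mul_left]
  refine tsum_congr fun n => ?_
  have hfM : ((M ! : ℕ) : ℂ) ≠ 0 := Nat.cast_ne_zero.mpr (Nat.factorial_ne_zero M)
  have hfn : ((n ! : ℕ) : ℂ) ≠ 0 := Nat.cast_ne_zero.mpr (Nat.factorial_ne_zero n)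
  have hfMn : (((M + n + 1)! : ℕ) : ℂ) ≠ 0 := Nat.cast_ne_zero.mpr (Nat.factorial_ne_zero _)
  rw [show (n + (M + 1)) = M + n + 1 from by omega]
  rw [show (-w) = (-α) * y from by rw [hw]; ring, mul_pow]
  push_cast
  field_simp
  ring

lemma deriv_final (α β : ℂ) (L : ℝ) (m : ℕ) :
    deriv (deriv (fun x : ℝ =>
        Complex.exp ((x : ℂ) * β) * E α (m + 2) ((x : ℂ) + (L : ℂ)))) 0
      = β ^ 2 * E α (m + 2) (L : ℂ) + 2 * β * E α (m + 1) (L : ℂ) + E α m (L : ℂ) := by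
  have hexp : ∀ z : ℂ, HasDerivAt (fun z : ℂ => Complex.exp (z * β))
      (β * Complex.exp (z * β)) z := by
    intro z
    have h := ((hasDerivAt_id z).mul_const β).cexp
    simpa [mul_comm] using h
  have hE : ∀ (k : ℕ) (z : ℂ), HasDerivAt (fun z : ℂ => E α (k + 1) (z + (L : ℂ)))
      (E α k (z + (L : ℂ))) z := by
    intro k z
    have h := (hasDerivAt_E α k (z + (L : ℂ))).comp z ((hasDerivAt_id z).add_const (L : ℂ))
    simpa [Function.comp_def] using h
  have hE2 : ∀ z : ℂ, HasDerivAt (fun z : ℂ => E α (m + 2) (z + (L : ℂ)))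
      (E α (m + 1) (z + (L : ℂ))) z := fun z => hE (m + 1) z
  have hE1 : ∀ z : ℂ, HasDerivAt (fun z : ℂ => E α (m + 1) (z + (L : ℂ)))
      (E α m (z + (L : ℂ))) z := fun z => hE m z
  set g1 : ℂ → ℂ := fun z =>
    β * Complex.exp (z * β) * E α (m + 2) (z + (L : ℂ)) +
      Complex.exp (z * β) * E α (m + 1) (z + (L : ℂ)) with hg1
  have hcongr : ∀ {f g : ℂ → ℂ} {a b z : ℂ}, HasDerivAt f a z → (∀ w, g w = f w) →
      b = a → HasDerivAt g b z := by
    intro f g a b z h hfg e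
    rw [e]
    exact h.congr_of_eventuallyEq (Filter.Eventually.of_forall hfg)
  have h1 : ∀ z : ℂ, HasDerivAt (fun z : ℂ => Complex.exp (z * β) * E α (m + 2) (z + (L : ℂ)))
      (g1 z) z := by
    intro z
    exact hcongr ((hexp z).mul (hE2 z)) (fun w => rfl) (by rw [hg1])
  have h2 : ∀ z : ℂ, HasDerivAt g1
      (β ^ 2 * Complex.exp (z * β) * E α (m + 2) (z + (L : ℂ)) +
        2 * β * Complex.exp (z * β) * E α (m + 1) (z + (L : ℂ)) +
        Complex.exp (z * β) * E α m (z + (L : ℂ))) z := by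
    intro z
    have ha := ((hexp z).mul (hE2 z)).const_mul β
    have hb := (hexp z).mul (hE1 z)
    exact hcongr (ha.add hb) (fun w => by simp only [hg1, Pi.add_apply, Pi.mul_apply]; ring) (by ring)
  have hd1 : deriv (fun x : ℝ => Complex.exp ((x : ℂ) * β) * E α (m + 2) ((x : ℂ) + (L : ℂ)))
      = fun x : ℝ => g1 (x : ℂ) := by
    funext t
    exact ((h1 (t : ℂ)).comp_ofReal).deriv
  rw [hd1]
  have hd2 := ((h2 ((0 : ℝ) : ℂ)).comp_ofReal).deriv
  rw [hd2]
  push_cast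
  simp [Complex.exp_zero]


lemma circleIntegral_add {f g : ℂ → ℂ} {c : ℂ} {R : ℝ} (hf : CircleIntegrable f c R)
    (hg : CircleIntegrable g c R) :
    (∮ z in C(c, R), (f z + g z)) = (∮ z in C(c, R), f z) + ∮ z in C(c, R), g z := by
  simp only [circleIntegral, smul_add, intervalIntegral.integral_add hf.out hg.out]


end Stmt7Aux

end

open Stmt7Aux in
theorem stmt7 (i : ℕ) (hi : 3 ≤ i) (α β : ℂ) (hα : ‖α‖ < 1) (X : ℝ) (hX : 0 < X) :
    (1 / (2 * Real.pi * I)) *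
        (∮ s in C(0, 1), (X : ℂ) ^ s * (β + s) ^ 2 / (α + s) * s ^ (-((i : ℤ) - 1)))
      = deriv (deriv (fun x : ℝ =>
          ((x + Real.log X : ℂ) ^ (i - 1) / (Nat.factorial (i - 2))) *
            ∫ u in (0:ℝ)..1, ((1 - u : ℝ) : ℂ) ^ (i - 2) *
              Complex.exp (x * (β - α * u)) * (X : ℂ) ^ (-α * u))) 0 := by
  obtain ⟨m, rfl⟩ : ∃ m, i = m + 3 := ⟨i - 3, by omega⟩
  set L : ℝ := Real.log X with hLdef
  have hXc : (X : ℂ) ≠ 0 := by simpa using ne_of_gt hX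
  have hlog : Complex.log (X : ℂ) = ((L : ℝ) : ℂ) := (Complex.ofReal_log hX.le).symm
  -- RHS
  have hrhs : deriv (deriv (fun x : ℝ =>
      ((x + Real.log X : ℂ) ^ (m + 3 - 1) / (Nat.factorial (m + 3 - 2))) *
        ∫ u in (0:ℝ)..1, ((1 - u : ℝ) : ℂ) ^ (m + 3 - 2) *
          Complex.exp (x * (β - α * u)) * (X : ℂ) ^ (-α * u))) 0
      = β ^ 2 * E α (m + 2) (L : ℂ) + 2 * β * E α (m + 1) (L : ℂ) + E α m (L : ℂ) := by
    have hfun : (fun x : ℝ =>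
        ((x + Real.log X : ℂ) ^ (m + 3 - 1) / (Nat.factorial (m + 3 - 2))) *
          ∫ u in (0:ℝ)..1, ((1 - u : ℝ) : ℂ) ^ (m + 3 - 2) *
            Complex.exp (x * (β - α * u)) * (X : ℂ) ^ (-α * u))
        = fun x : ℝ => Complex.exp ((x : ℂ) * β) * E α (m + 2) ((x : ℂ) + (L : ℂ)) := by
      funext x
      exact rhs_fun_eq α β X hX (m + 1) x
    rw [hfun]
    exact deriv_final α β L m
  rw [hrhs]
  -- LHS
  set A : ℂ → ℂ := fun z => Complex.exp (L * z) * z ^ (-((m + 2 : ℕ) : ℤ)) / (z + α) with hA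
  set B : ℂ → ℂ := fun z => Complex.exp (L * z) * z ^ (-((m + 1 : ℕ) : ℤ)) / (z + α) with hB
  set C : ℂ → ℂ := fun z => Complex.exp (L * z) * z ^ (-((m : ℕ) : ℤ)) / (z + α) with hC
  have contk : ∀ k : ℤ, ContinuousOn
      (fun z : ℂ => Complex.exp (L * z) * z ^ k / (z + α)) (sphere (0 : ℂ) 1) := by
    intro k
    have h1 : ContinuousOn (fun z : ℂ => Complex.exp (L * z)) (sphere (0 : ℂ) 1) :=
      (Complex.continuous_exp.comp (continuous_const.mul continuous_id)).continuousOn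
    exact ((h1.mul (cont_zpow_sphere k)).mul (cont_inv_add α hα)).congr
      (fun z _ => by rw [div_eq_mul_inv]; rfl)
  have key : EqOn (fun s : ℂ => (X : ℂ) ^ s * (β + s) ^ 2 / (α + s) * s ^ (-((↑(m + 3) : ℤ) - 1)))
      (fun z => β ^ 2 * A z + (2 * β * B z + C z)) (sphere (0 : ℂ) 1) := by
    intro z hz
    have hz0 := sphere_ne_zero hz
    have hza := sphere_add_ne_zero hα hz
    simp only [hA, hB, hC]
    have hcpow : (X : ℂ) ^ z = Complex.exp ((L : ℂ) * z) := by
      rw [Complex.cpow_def_of_ne_zero hXc, hlog]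
    rw [hcpow]
    have e0 : z ^ (-((↑(m + 3) : ℤ) - 1)) = (z ^ (m + 2 : ℕ))⁻¹ := by
      rw [show (-((↑(m + 3) : ℤ) - 1)) = -((m + 2 : ℕ) : ℤ) from by push_cast; ring,
        zpow_neg, zpow_natCast]
    have e1 : z ^ (-((m + 2 : ℕ) : ℤ)) = (z ^ (m + 2 : ℕ))⁻¹ := by
      rw [zpow_neg, zpow_natCast]
    have e2 : z ^ (-((m + 1 : ℕ) : ℤ)) = (z ^ (m + 1 : ℕ))⁻¹ := by
      rw [zpow_neg, zpow_natCast]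
    have e3 : z ^ (-((m : ℕ) : ℤ)) = (z ^ (m : ℕ))⁻¹ := by
      rw [zpow_neg, zpow_natCast]
    rw [e0, e1, e2, e3]
    have hp2 : z ^ (m + 2 : ℕ) ≠ 0 := pow_ne_zero _ hz0
    have hp1 : z ^ (m + 1 : ℕ) ≠ 0 := pow_ne_zero _ hz0
    have hp0 : z ^ (m : ℕ) ≠ 0 := pow_ne_zero _ hz0
    have haz : α + z ≠ 0 := by rwa [add_comm]
    field_simp
    ring
  rw [circleIntegral.integral_congr zero_le_one key]
  have intA : CircleIntegrable (fun z => β ^ 2 * A z) 0 1 :=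
    ((continuousOn_const.mul (contk (-((m + 2 : ℕ) : ℤ)))).circleIntegrable zero_le_one)
  have intB : CircleIntegrable (fun z => 2 * β * B z) 0 1 :=
    ((continuousOn_const.mul (contk (-((m + 1 : ℕ) : ℤ)))).circleIntegrable zero_le_one)
  have intC : CircleIntegrable C 0 1 :=
    ((contk (-((m : ℕ) : ℤ))).circleIntegrable zero_le_one)
  have intBC : CircleIntegrable (fun z => 2 * β * B z + C z) 0 1 := intB.add intC
  rw [circleIntegral_add intA intBC,
    circleIntegral_add intB intC,
    circleIntegral.integral_const_mul, circleIntegral.integral_const_mul]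
  rw [hA, hB, hC, circle_exp_zpow α hα L (m + 2), circle_exp_zpow α hα L (m + 1),
    circle_exp_zpow α hα L m]
  have h2pi : (2 * (π : ℂ) * I) ≠ 0 := by
    simp [Real.pi_ne_zero, I_ne_zero]
  field_simp
  ring
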